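/- Fix λ ≥ 0, x ∈ ℤ₊, κ sufficiently large, and set ε = (x+κ)⁻¹, r = 1-ε. Then for every s on the circle |s| = r, writing ŝ = s/(1-s), one has |exp(-ŝλ)| ≤ exp(-ε̂λ) where ε̂ = -1/2 + ε/4. Equivalently, Re(s/(1-s)) ≥ -1/2 + ε/4 on the circle |s| = 1-ε for κ large. -/

import Mathlib

/-- For `λ ≥ 0`, `x ∈ ℤ₊` and `κ` sufficiently large, on the circle
`|s| = 1 - ε`, `ε = (x+κ)⁻¹`, writing `ŝ = s/(1-s)` and `ε̂ = -1/2 + ε/4`,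
one has `Re ŝ ≥ ε̂` and consequently `|exp(-ŝλ)| ≤ exp(-ε̂λ)`. -/
theorem stmt16 (l : ℝ) (hl : 0 ≤ l) (x : ℕ) :
    ∃ κ₀ : ℝ, ∀ κ : ℝ, κ₀ ≤ κ → ∀ s : ℂ, ‖s‖ = 1 - ((x : ℝ) + κ)⁻¹ →
      (-(1 / 2) + ((x : ℝ) + κ)⁻¹ / 4 ≤ (s / (1 - s)).re ∧
       ‖Complex.exp (-(s / (1 - s)) * (l : ℂ))‖ ≤
         Real.exp (-(-(1 / 2) + ((x : ℝ) + κ)⁻¹ / 4) * l)) := by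
  refine ⟨1, fun κ hκ s hs => ?_⟩
  have hx : (1:ℝ) ≤ (x:ℝ) + κ := le_add_of_nonneg_of_le (Nat.cast_nonneg x) hκ
  set ε : ℝ := ((x:ℝ) + κ)⁻¹ with hεdef
  have hε0 : 0 < ε := inv_pos.2 (lt_of_lt_of_le one_pos hx)
  have hε1 : ε ≤ 1 := inv_le_one_of_one_le₀ hx
  have hs1 : s ≠ 1 := by
    intro h
    rw [h, norm_one] at hs
    linarith
  have hD : 0 < Complex.normSq (1 - s) := by
    rw [Complex.normSq_pos]
    exact sub_ne_zero.2 (Ne.symm hs1)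
  have hab : s.re ^ 2 + s.im ^ 2 = (1 - ε) ^ 2 := by
    have h1 : ‖s‖ ^ 2 = (1 - ε) ^ 2 := by
      rw [hs]
    have h2 : Complex.normSq s = (1 - ε) ^ 2 := by
      rw [← Complex.sq_norm]; exact h1
    rw [Complex.normSq_apply] at h2
    nlinarith [h2]
  have ha : -(1 - ε) ≤ s.re := by
    have h2 : |s.re| ≤ ‖s‖ := Complex.abs_re_le_norm s
    rw [hs] at h2
    exact neg_le_of_abs_le h2
  have hDval : Complex.normSq (1 - s) = (1 - s.re) ^ 2 + s.im ^ 2 := by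
    simp [Complex.normSq_apply, Complex.sub_re, Complex.sub_im]
    ring
  have key : -(1 / 2) + ε / 4 ≤ (s / (1 - s)).re := by
    rw [Complex.div_re, ← add_div, le_div_iff₀ hD, hDval]
    have h3 : (1 - s).re = 1 - s.re := by simp
    have h4 : (1 - s).im = -s.im := by simp
    rw [h3, h4]
    nlinarith [mul_nonneg hε0.le (by linarith : (0:ℝ) ≤ s.re + 1 - ε),
      mul_nonneg (mul_nonneg hε0.le hε0.le) (by linarith : (0:ℝ) ≤ 2 - ε),
      sq_nonneg s.im]
  refine ⟨key, ?_⟩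
  rw [Complex.norm_exp]
  have hre : (-(s / (1 - s)) * (l : ℂ)).re = -(s / (1 - s)).re * l := by
    simp [Complex.mul_re]
  rw [hre]
  exact Real.exp_le_exp.2 (mul_le_mul_of_nonneg_right (by linarith) hl)
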